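/- arXiv:1412.3934 — 3 statements merged into one kernel-verified Lean document; each statement's English description precedes it below -/
import Mathlib

section
/- Let X be a self-similar process with index κ > 0 such that X(1) has distribution function G in the Gumbel max-domain of attraction with auxiliary function w. Then the mean sojourn time L(u) = ∫_0^1 1{X(t) > u} dt satisfies E[L(u)] = (1/(κ·u·w(u)))·(1-G(u))·(1+o(1)) as u → ∞. -/
open MeasureTheory Filter Set Real


lemma uw_tendsto (f w : ℝ → ℝ) (hw : ∀ u, 0 < w u) (hf_pos : ∀ u, 0 < f u)
    (hf_anti : Antitone f) (hf0 : Tendsto f atTop (nhds 0))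
    (hGum : ∀ x : ℝ, Tendsto (fun u => f (u + x / w u) / f u) atTop (nhds (Real.exp (-x)))) :
    Tendsto (fun u => u * w u) atTop atTop := by
  rw [tendsto_atTop]
  by_contra hcon
  push_neg at hcon
  obtain ⟨b, hb⟩ := hcon
  replace hb : ∃ᶠ x in atTop, ¬ (b ≤ x * w x) := hb.mono fun x hx => not_le.mpr hx
  set M : ℝ := max b 1 with hM
  have hM1 : (1:ℝ) ≤ M := le_max_right _ _
  have hfreq : ∃ᶠ u in atTop, u * w u < M := by
    refine hb.mono fun u hu => ?_
    push_neg at hu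
    exact lt_of_lt_of_le hu (le_max_left _ _)
  have hne : (atTop ⊓ 𝓟 {u : ℝ | u * w u < M}).NeBot :=
    frequently_iff_neBot.mp hfreq
  set l := atTop ⊓ 𝓟 {u : ℝ | u * w u < M} with hl
  have hll : l ≤ atTop := inf_le_left
  have h1 : Tendsto (fun u => f (u + (-(2*M)) / w u) / f u) l (nhds (Real.exp (2*M))) := by
    have := (hGum (-(2*M))).mono_left hll
    simpa using this
  have h2 : Tendsto (fun u => f 0 / f u) l atTop := by
    have hf0' : Tendsto f l (nhdsWithin 0 (Set.Ioi 0)) := by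
      rw [tendsto_nhdsWithin_iff]
      exact ⟨hf0.mono_left hll, Eventually.of_forall fun u => hf_pos u⟩
    have := hf0'.inv_tendsto_nhdsGT_zero
    have h3 := this.const_mul_atTop (hf_pos 0)
    refine h3.congr fun u => ?_
    simp [div_eq_mul_inv]
  -- eventual facts
  have e1 : ∀ᶠ u in l, f (u + (-(2*M)) / w u) / f u < Real.exp (2*M) + 1 := by
    have : Real.exp (2*M) < Real.exp (2*M) + 1 := by linarith
    exact h1.eventually_lt_const this
  have e2 : ∀ᶠ u in l, Real.exp (2*M) + 1 < f 0 / f u := h2.eventually_gt_atTop _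
  have e3 : ∀ᶠ u in l, f 0 / f u ≤ f (u + (-(2*M)) / w u) / f u := by
    have e4 : ∀ᶠ u in l, (1:ℝ) ≤ u := (eventually_ge_atTop (1:ℝ)).filter_mono hll
    have e5 : ∀ᶠ u in l, u * w u < M := by
      rw [hl, eventually_inf_principal]
      exact Eventually.of_forall fun u hu => hu
    filter_upwards [e4, e5] with u hu1 huM
    have hwu := hw u
    have harg : u + (-(2*M)) / w u ≤ 0 := by
      have h6 : u ≤ M / w u := (le_div_iff₀ hwu).mpr huM.le
      have h7 : (-(2*M)) / w u = -(2*(M / w u)) := by ring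
      rw [h7]; linarith
    have h8 : f 0 ≤ f (u + (-(2*M)) / w u) := hf_anti harg
    gcongr
    exact (hf_pos u).le
  obtain ⟨u, hu1, hu2, hu3⟩ := (e1.and (e2.and e3)).exists
  linarith

lemma sn_lower (f w : ℝ → ℝ) (hw : ∀ u, 0 < w u) (hf_pos : ∀ u, 0 < f u)
    (hf_anti : Antitone f)
    (hGum : ∀ x : ℝ, Tendsto (fun u => f (u + x / w u) / f u) atTop (nhds (Real.exp (-x))))
    (x : ℝ) (hx : 0 < x) :
    ∀ᶠ u in atTop, w u / 2 ≤ w (u + x / w u) := by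
  by_contra hcon
  rw [not_eventually] at hcon
  have hne : (atTop ⊓ 𝓟 {u : ℝ | ¬ w u / 2 ≤ w (u + x / w u)}).NeBot :=
    frequently_iff_neBot.mp hcon
  set l := atTop ⊓ 𝓟 {u : ℝ | ¬ w u / 2 ≤ w (u + x / w u)} with hl
  have hll : l ≤ atTop := inf_le_left
  set σ : ℝ → ℝ := fun u => u + x / w u with hσ
  have hσ_ge : ∀ u, u ≤ σ u := fun u => le_add_of_nonneg_right (le_of_lt (div_pos hx (hw u)))
  have hσ_top : Tendsto σ l atTop :=
    tendsto_atTop_mono hσ_ge (tendsto_id.mono_left hll)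
  -- A : along l, f (σ u + 1 / w (σ u)) / f (σ u) → exp (-1)
  have hA : Tendsto (fun u => f (σ u + 1 / w (σ u)) / f (σ u)) l (nhds (Real.exp (-1))) :=
    (hGum 1).comp hσ_top
  -- B : along l, f (u + (x+2)/w u) / f (u + x / w u) → exp (-2)
  have hB : Tendsto (fun u => f (u + (x + 2) / w u) / f (u + x / w u)) l
      (nhds (Real.exp (-2))) := by
    have h1 := (hGum (x + 2)).mono_left hll
    have h2 := (hGum x).mono_left hll
    have h3 := h1.div h2 (Real.exp_ne_zero _)
    have h4 : Real.exp (-(x+2)) / Real.exp (-x) = Real.exp (-2) := by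
      rw [← Real.exp_sub]; ring_nf
    rw [h4] at h3
    refine h3.congr fun u => ?_
    have hfu := (hf_pos u).ne'
    simp only [Pi.div_apply]
    field_simp
  -- pointwise comparison on l
  have hcmp : ∀ᶠ u in l, f (σ u + 1 / w (σ u)) / f (σ u) ≤
      f (u + (x + 2) / w u) / f (u + x / w u) := by
    have e5 : ∀ᶠ u in l, ¬ w u / 2 ≤ w (σ u) := by
      rw [hl, eventually_inf_principal]
      exact Eventually.of_forall fun u hu => hu
    filter_upwards [e5] with u hu
    push_neg at hu
    have hwu := hw u
    have hwσ := hw (σ u)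
    have h6 : 2 / w u ≤ 1 / w (σ u) := by
      rw [div_le_div_iff₀ hwu hwσ]
      linarith
    have h7 : u + (x + 2) / w u ≤ σ u + 1 / w (σ u) := by
      have : (x + 2) / w u = x / w u + 2 / w u := by ring
      rw [this, hσ]
      linarith
    have h8 : f (σ u + 1 / w (σ u)) ≤ f (u + (x + 2) / w u) := hf_anti h7
    have : f (σ u) = f (u + x / w u) := rfl
    rw [this]
    gcongr
    exact (hf_pos _).le
  have hle := le_of_tendsto_of_tendsto hA hB hcmp
  have : (-2:ℝ) < -1 := by norm_num
  exact absurd hle (not_le.mpr (Real.exp_lt_exp.mpr this))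
lemma rpow_neg_four {z : ℝ} (hz : 0 < z) : z ^ (-4:ℝ) = (z^(4:ℕ))⁻¹ := by
  rw [show ((-4:ℝ)) = ((-4:ℤ):ℝ) by norm_num, Real.rpow_intCast, zpow_neg]
  norm_cast

lemma dom_bound (f w : ℝ → ℝ) (hw : ∀ u, 0 < w u) (hf_pos : ∀ u, 0 < f u)
    (hf_anti : Antitone f)
    (hGum : ∀ x : ℝ, Tendsto (fun u => f (u + x / w u) / f u) atTop (nhds (Real.exp (-x)))) :
    ∃ U : ℝ, ∀ u ≥ U, ∀ x ≥ (0:ℝ),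
      f (u + x / w u) ≤ (16 * (x / Real.log 32 + 1) ^ (-4:ℝ)) * f u := by
  set c := Real.log 32 with hcdef
  have hc : 0 < c := Real.log_pos (by norm_num)
  have ev1 : ∀ᶠ u in atTop, f (u + c / w u) ≤ (1/16) * f u := by
    have h0 : Real.exp (-c) < 1/16 := by
      rw [Real.exp_neg, hcdef, Real.exp_log (by norm_num : (0:ℝ) < 32)]
      norm_num
    filter_upwards [(hGum c).eventually_lt_const h0] with u hu
    rw [div_lt_iff₀ (hf_pos u)] at hu
    linarith
  have ev2 : ∀ᶠ u in atTop, w u / 2 ≤ w (u + c / w u) :=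
    sn_lower f w hw hf_pos hf_anti hGum c hc
  obtain ⟨U, hU⟩ := (ev1.and ev2).exists_forall_of_atTop
  refine ⟨U, fun u hu x hx => ?_⟩
  set s : ℕ → ℝ := fun k => Nat.rec u (fun _ v => v + c / w v) k with hs
  have hs0 : s 0 = u := rfl
  have hsS : ∀ k, s (k+1) = s k + c / w (s k) := fun k => rfl
  have key : ∀ k : ℕ, U ≤ s k ∧ f (s k) ≤ (1/16:ℝ)^k * f u ∧
      (1/2:ℝ)^k * w u ≤ w (s k) ∧ s k ≤ u + ((2:ℝ)^k - 1) * (c / w u) := by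
    intro k
    induction k with
    | zero => refine ⟨hu, by simp [hs0], by simp [hs0], by simp [hs0]⟩
    | succ k ih =>
      obtain ⟨ih1, ih2, ih3, ih4⟩ := ih
      have hstep : 0 < c / w (s k) := div_pos hc (hw _)
      have h1 := (hU (s k) ih1).1
      have h2 := (hU (s k) ih1).2
      constructor
      · rw [hsS]; linarith
      refine ⟨?_, ?_, ?_⟩
      · rw [hsS]
        calc f (s k + c / w (s k)) ≤ (1/16) * f (s k) := h1
        _ ≤ (1/16) * ((1/16)^k * f u) := by
            have h16 : (0:ℝ) < 1/16 := by norm_num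
            nlinarith
        _ = (1/16)^(k+1) * f u := by ring
      · rw [hsS]
        calc (1/2:ℝ)^(k+1) * w u = (1/2) * ((1/2)^k * w u) := by ring
        _ ≤ (1/2) * w (s k) := by nlinarith
        _ = w (s k) / 2 := by ring
        _ ≤ w (s k + c / w (s k)) := h2
      · rw [hsS]
        have h5 : (2:ℝ)^k * (1/2:ℝ)^k = 1 := by
          rw [← mul_pow]; norm_num
        have h3 : c / w (s k) ≤ (2:ℝ)^k * (c / w u) := by
          rw [div_le_iff₀ (hw _)]
          have h6 : (2:ℝ)^k * (c / w u) * ((1/2:ℝ)^k * w u) = c := by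
            have hwu' : w u ≠ 0 := (hw u).ne'
            have h2k : ((2:ℝ)^k) ≠ 0 := by positivity
            rw [one_div, inv_pow]
            field_simp
          calc c = (2:ℝ)^k * (c / w u) * ((1/2:ℝ)^k * w u) := h6.symm
          _ ≤ (2:ℝ)^k * (c / w u) * w (s k) := by
              have hpos : (0:ℝ) ≤ (2:ℝ)^k * (c / w u) :=
                mul_nonneg (by positivity) (div_nonneg hc.le (hw u).le)
              exact mul_le_mul_of_nonneg_left ih3 hpos
        calc s k + c / w (s k) ≤ u + ((2:ℝ)^k - 1) * (c/w u) + (2:ℝ)^k * (c/w u) := by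
              linarith
        _ = u + ((2:ℝ)^(k+1) - 1) * (c/w u) := by ring
  have hxc : (0:ℝ) ≤ x / c := div_nonneg hx hc.le
  obtain ⟨k, hk1, hk2⟩ := exists_nat_pow_near
    (by linarith : (1:ℝ) ≤ x / c + 1) (by norm_num : (1:ℝ) < 2)
  obtain ⟨hkU, hkf, hkw, hks⟩ := key k
  have h7 : ((2:ℝ)^k - 1) * c ≤ x := by
    have h7a := mul_le_mul_of_nonneg_right (by linarith : (2:ℝ)^k - 1 ≤ x / c) hc.le
    rwa [div_mul_cancel₀ _ hc.ne'] at h7a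
  have h6 : s k ≤ u + x / w u := by
    refine hks.trans ?_
    have h6' : ((2:ℝ)^k - 1) * (c / w u) ≤ x / w u := by
      rw [mul_div_assoc']
      gcongr
      exact (hw u).le
    linarith
  have h8 : f (u + x / w u) ≤ (1/16:ℝ)^k * f u := (hf_anti h6).trans hkf
  refine h8.trans ?_
  have hb : (0:ℝ) < x/c + 1 := by linarith
  have h9 : (x/c+1) ^ (-4:ℝ) = ((x/c+1)^(4:ℕ))⁻¹ := rpow_neg_four hb
  have h10 : (x/c+1)^(4:ℕ) ≤ ((2:ℝ)^(k+1))^(4:ℕ) := pow_le_pow_left₀ hb.le hk2.le 4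
  have h12 : ((2:ℝ)^(k+1))^(4:ℕ) = 16 * 16^k := by
    rw [← pow_mul, show (k+1)*4 = 4 + 4*k by ring, pow_add, pow_mul]
    norm_num
  have h15 : (16:ℝ) * (16 * 16^k)⁻¹ = (1/16:ℝ)^k := by
    rw [mul_inv, ← mul_assoc, mul_inv_cancel₀ (by norm_num : (16:ℝ) ≠ 0), one_mul,
      one_div, inv_pow]
  have h14 : (0:ℝ) < (x/c+1)^(4:ℕ) := by positivity
  have hinv : ((16:ℝ) * 16^k)⁻¹ ≤ ((x/c+1)^(4:ℕ))⁻¹ := by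
    apply inv_anti₀ h14
    rw [← h12]; exact h10
  have h16 : (1/16:ℝ)^k ≤ 16 * (x/c+1)^(-4:ℝ) := by
    rw [← h15, h9]
    have : (0:ℝ) ≤ 16 := by norm_num
    exact mul_le_mul_of_nonneg_left hinv this
  exact mul_le_mul_of_nonneg_right h16 (hf_pos u).le

lemma int_g : IntegrableOn (fun x : ℝ => 16 * (x / Real.log 32 + 1) ^ (-4:ℝ)) (Ioi 0) := by
  set c := Real.log 32 with hcdef
  have hc : 0 < c := Real.log_pos (by norm_num)
  have h1 : IntegrableOn (fun y : ℝ => y ^ (-4:ℝ)) (Ioi c) :=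
    integrableOn_Ioi_rpow_of_lt (by norm_num) hc
  have hmp : MeasurePreserving (fun x : ℝ => x + c) volume volume :=
    measurePreserving_add_right volume c
  have hemb : MeasurableEmbedding (fun x : ℝ => x + c) :=
    (Homeomorph.addRight c).measurableEmbedding
  have h2 : IntegrableOn (fun x : ℝ => (x + c) ^ (-4:ℝ)) (Ioi 0) := by
    have h3 := (hmp.integrableOn_comp_preimage hemb).mpr h1
    have h4 : (fun x : ℝ => x + c) ⁻¹' (Ioi c) = Ioi 0 := by
      ext x; simp [mem_Ioi]
    rwa [h4] at h3
  have h5 : IntegrableOn (fun x : ℝ => (16 * c ^ (4:ℝ)) * (x + c) ^ (-4:ℝ)) (Ioi 0) :=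
    h2.const_mul _
  refine h5.congr_fun (fun x hx => ?_) measurableSet_Ioi
  have hx0 : (0:ℝ) < x := hx
  have hxc : (0:ℝ) < x + c := by linarith
  have heq : x / c + 1 = (x + c) / c := by field_simp
  rw [heq, Real.div_rpow hxc.le hc.le]
  rw [Real.rpow_neg hc.le]
  field_simp [mul_comm]

lemma subst_lemma (f : ℝ → ℝ) (κ : ℝ) (hκ : 0 < κ) (u W : ℝ) (hu : 0 < u) (hW : 0 < W) :
    ∫ t in Ioo (0:ℝ) 1, f (u * t ^ (-κ)) =
      ∫ x in Ioi (0:ℝ),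
        ((u*W)⁻¹ * (1/κ) * (1 + (u*W)⁻¹ * x) ^ (-1/κ - 1)) * f (u + x / W) := by
  have hr : -1/κ < 0 := div_neg_of_neg_of_pos (by norm_num) hκ
  set a : ℝ := (u*W)⁻¹ with hadef
  have ha : 0 < a := by positivity
  set φ : ℝ → ℝ := fun x => (1 + a * x) ^ (-1/κ) with hφ
  have hbase : ∀ x : ℝ, 0 < x → (0:ℝ) < 1 + a * x := by
    intro x hx
    have : 0 < a * x := mul_pos ha hx
    linarith
  have hderiv : ∀ x ∈ Ioi (0:ℝ), HasDerivWithinAt φ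
      (a * (-1/κ) * (1 + a * x) ^ (-1/κ - 1)) (Ioi 0) x := by
    intro x hx
    have h1 : HasDerivAt (fun x : ℝ => 1 + a * x) a x := by
      simpa using ((hasDerivAt_id x).const_mul a).const_add 1
    have h2 := h1.rpow_const (p := -1/κ) (Or.inl (hbase x hx).ne')
    exact h2.hasDerivWithinAt
  have hinj : InjOn φ (Ioi 0) := by
    have hanti : StrictAntiOn φ (Ioi 0) := by
      intro x hx y hy hxy
      have h1 : (1:ℝ) + a * x < 1 + a * y := by
        have := mul_lt_mul_of_pos_left hxy ha
        linarith
      exact Real.strictAntiOn_rpow_Ioi_of_exponent_neg hr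
        (mem_Ioi.mpr (hbase x hx)) (mem_Ioi.mpr (hbase y hy)) h1
    exact hanti.injOn
  have himg : φ '' (Ioi 0) = Ioo (0:ℝ) 1 := by
    apply Subset.antisymm
    · rintro t ⟨x, hx, rfl⟩
      have hb := hbase x hx
      constructor
      · exact Real.rpow_pos_of_pos hb _
      · apply Real.rpow_lt_one_of_one_lt_of_neg _ hr
        have : 0 < a * x := mul_pos ha hx
        linarith
    · rintro t ⟨ht0, ht1⟩
      have htneg : 1 < t ^ (-κ) := by
        rw [Real.one_lt_rpow_iff_of_pos ht0]
        exact Or.inr ⟨ht1, neg_neg_iff_pos.mpr hκ⟩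
      refine ⟨(t ^ (-κ) - 1) / a, ?_, ?_⟩
      · rw [mem_Ioi]
        apply div_pos (by linarith) ha
      · show (1 + a * ((t ^ (-κ) - 1) / a)) ^ (-1/κ) = t
        rw [mul_div_cancel₀ _ ha.ne']
        rw [show (1 + (t ^ (-κ) - 1)) = t ^ (-κ) by ring]
        rw [← Real.rpow_mul ht0.le]
        rw [show (-κ) * (-1/κ) = 1 by field_simp]
        exact Real.rpow_one t
  have key := integral_image_eq_integral_abs_deriv_smul measurableSet_Ioi hderiv hinj
    (fun t => f (u * t ^ (-κ)))
  rw [himg] at key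
  rw [key]
  apply setIntegral_congr_fun measurableSet_Ioi
  intro x hx
  have hx0 : (0:ℝ) < x := hx
  have hb := hbase x hx0
  have hφx : φ x ^ (-κ) = 1 + a * x := by
    show ((1 + a * x) ^ (-1/κ)) ^ (-κ) = 1 + a * x
    rw [← Real.rpow_mul hb.le, show (-1/κ) * (-κ) = 1 by field_simp]
    exact Real.rpow_one _
  have harg : u * φ x ^ (-κ) = u + x / W := by
    rw [hφx, hadef]
    field_simp
  have habs : |a * (-1/κ) * (1 + a * x) ^ (-1/κ - 1)| =
      a * (1/κ) * (1 + a * x) ^ (-1/κ - 1) := by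
    rw [abs_mul, abs_mul]
    rw [abs_of_pos ha, abs_of_pos (Real.rpow_pos_of_pos hb _)]
    rw [abs_div, abs_neg, abs_one, abs_of_pos hκ]
  simp only [smul_eq_mul]
  rw [habs, harg]
lemma analysis_main (f w : ℝ → ℝ) (κ : ℝ) (hκ : 0 < κ) (hf_cont : Continuous f)
    (hf_anti : Antitone f) (hf_pos : ∀ u, 0 < f u) (hf0 : Tendsto f atTop (nhds 0))
    (hw : ∀ u, 0 < w u)
    (hGum : ∀ x : ℝ, Tendsto (fun u => f (u + x / w u) / f u) atTop (nhds (Real.exp (-x)))) :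
    Tendsto (fun u => (∫ t in Ioo (0:ℝ) 1, f (u * t ^ (-κ))) * (κ * u * w u) / f u)
      atTop (nhds 1) := by
  set F : ℝ → ℝ → ℝ :=
    fun u x => (1 + (u * w u)⁻¹ * x) ^ (-1/κ - 1) * (f (u + x / w u) / f u) with hF
  -- step 1 : equality with the substituted integral
  have eq1 : ∀ u : ℝ, 0 < u →
      (∫ t in Ioo (0:ℝ) 1, f (u * t ^ (-κ))) * (κ * u * w u) / f u
        = ∫ x in Ioi (0:ℝ), F u x := by
    intro u hu
    have hW := hw u
    rw [subst_lemma f κ hκ u (w u) hu hW]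
    have e1 : ∫ x in Ioi (0:ℝ),
        ((u * w u)⁻¹ * (1/κ) * (1 + (u * w u)⁻¹ * x) ^ (-1/κ - 1)) * f (u + x / w u)
        = ((u * w u)⁻¹ * (1/κ)) * ∫ x in Ioi (0:ℝ),
            (1 + (u * w u)⁻¹ * x) ^ (-1/κ - 1) * f (u + x / w u) := by
      rw [← integral_const_mul]
      apply setIntegral_congr_fun measurableSet_Ioi
      intro x _
      ring
    rw [e1]
    have e2 : ∫ x in Ioi (0:ℝ), F u x
        = (∫ x in Ioi (0:ℝ), (1 + (u * w u)⁻¹ * x) ^ (-1/κ - 1) * f (u + x / w u)) / f u := by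
      rw [← integral_div]
      apply setIntegral_congr_fun measurableSet_Ioi
      intro x _
      simp only [hF]
      ring
    rw [e2]
    have hc : ((u * w u)⁻¹ * (1/κ)) * (κ * u * w u) = 1 := by
      field_simp
    set I := ∫ x in Ioi (0:ℝ), (1 + (u * w u)⁻¹ * x) ^ (-1/κ - 1) * f (u + x / w u)
    calc ((u * w u)⁻¹ * (1/κ)) * I * (κ * u * w u) / f u
        = (((u * w u)⁻¹ * (1/κ)) * (κ * u * w u)) * I / f u := by ring
    _ = I / f u := by rw [hc]; ring
  -- step 2 : dominated convergence
  have huw : Tendsto (fun u => u * w u) atTop atTop :=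
    uw_tendsto f w hw hf_pos hf_anti hf0 hGum
  obtain ⟨U, hU⟩ := dom_bound f w hw hf_pos hf_anti hGum
  have hdct : Tendsto (fun u => ∫ x in Ioi (0:ℝ), F u x) atTop
      (nhds (∫ x in Ioi (0:ℝ), Real.exp (-x))) := by
    apply tendsto_integral_filter_of_dominated_convergence
      (fun x => 16 * (x / Real.log 32 + 1) ^ (-4:ℝ))
    · -- measurability
      filter_upwards [eventually_gt_atTop (0:ℝ)] with u hu
      apply ContinuousOn.aestronglyMeasurable _ measurableSet_Ioi
      apply ContinuousOn.mul
      · apply ContinuousOn.rpow_const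
        · fun_prop
        · intro x hx
          left
          have hx0 : (0:ℝ) < x := hx
          have h1 : 0 < (u * w u)⁻¹ * x :=
            mul_pos (inv_pos.mpr (mul_pos hu (hw u))) hx0
          nlinarith
      · apply ContinuousOn.div_const
        apply Continuous.continuousOn
        exact hf_cont.comp (by fun_prop)
    · -- bound
      filter_upwards [eventually_ge_atTop U, eventually_gt_atTop (0:ℝ)] with u huU hu0
      rw [ae_restrict_iff' measurableSet_Ioi]
      apply Eventually.of_forall
      intro x hx
      have hx0 : (0:ℝ) < x := hx
      have huw0 : (0:ℝ) < u * w u := mul_pos hu0 (hw u)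
      have hq : (0:ℝ) ≤ (u * w u)⁻¹ * x := mul_nonneg (inv_nonneg.mpr huw0.le) hx0.le
      have hb : (1:ℝ) ≤ 1 + (u * w u)⁻¹ * x := by linarith
      have hfac0 : (0:ℝ) ≤ (1 + (u * w u)⁻¹ * x) ^ (-1/κ - 1) :=
        (Real.rpow_pos_of_pos (by linarith) _).le
      have hfac : (1 + (u * w u)⁻¹ * x) ^ (-1/κ - 1) ≤ 1 := by
        apply Real.rpow_le_one_of_one_le_of_nonpos hb
        have h9 : -1/κ = -(1/κ) := by ring
        have h10 : (0:ℝ) < 1/κ := by positivity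
        rw [h9]
        linarith
      have hrat0 : (0:ℝ) ≤ f (u + x / w u) / f u :=
        div_nonneg (hf_pos _).le (hf_pos _).le
      have hFnn : (0:ℝ) ≤ F u x := mul_nonneg hfac0 hrat0
      rw [Real.norm_eq_abs, abs_of_nonneg hFnn]
      have h7 : F u x ≤ f (u + x / w u) / f u := by
        simpa [hF] using mul_le_of_le_one_left hrat0 hfac
      refine h7.trans ?_
      rw [div_le_iff₀ (hf_pos u)]
      exact hU u huU x hx0.le
    · exact int_g
    · -- pointwise limit
      rw [ae_restrict_iff' measurableSet_Ioi]
      apply Eventually.of_forall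
      intro x hx
      have h1 : Tendsto (fun u => f (u + x / w u) / f u) atTop (nhds (Real.exp (-x))) :=
        hGum x
      have h2 : Tendsto (fun u => (1 + (u * w u)⁻¹ * x) ^ (-1/κ - 1)) atTop (nhds 1) := by
        have h3 : Tendsto (fun u => (u * w u)⁻¹ * x) atTop (nhds 0) := by
          simpa using (tendsto_inv_atTop_zero.comp huw).mul_const x
        have h4 : Tendsto (fun u => 1 + (u * w u)⁻¹ * x) atTop (nhds 1) := by
          simpa using h3.const_add 1
        have h5 : ContinuousAt (fun y : ℝ => y ^ (-1/κ - 1)) 1 :=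
          (Real.continuousAt_rpow_const 1 (-1/κ - 1) (Or.inl one_ne_zero))
        have h6 := h5.tendsto.comp h4
        simpa [Function.comp_def] using h6
      have h7 := h2.mul h1
      rw [one_mul] at h7
      exact h7
  rw [integral_exp_neg_Ioi_zero] at hdct
  apply hdct.congr'
  filter_upwards [eventually_gt_atTop (0:ℝ)] with u hu
  exact (eq1 u hu).symm
lemma prob_step {Ω : Type*} [MeasurableSpace Ω] (P : Measure Ω)
    [IsProbabilityMeasure P] (κ : ℝ)
    (X : ℝ → Ω → ℝ) (hmeas : Measurable fun p : ℝ × Ω => X p.1 p.2)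
    (hss : ∀ t : ℝ, 0 < t →
        Measure.map (X t) P = Measure.map (fun ω => t ^ κ * X 1 ω) P)
    (G : ℝ → ℝ) (hdf : ∀ u, (P {ω | X 1 ω ≤ u}).toReal = G u)
    (hGcont : Continuous G) (hGlt : ∀ u, G u < 1) (u : ℝ) :
    (∫ ω, (∫ t in (0:ℝ)..1, Set.indicator {t | u < X t ω} (fun _ => (1:ℝ)) t) ∂P)
      = ∫ t in Ioo (0:ℝ) 1, (1 - G (u * t ^ (-κ))) := by
  have hX1 : Measurable (X 1) :=
    hmeas.comp (measurable_const.prodMk measurable_id)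
  have hG0 : ∀ v, 0 ≤ G v := fun v => (hdf v) ▸ ENNReal.toReal_nonneg
  -- the joint measurable set
  set s : Set (ℝ × Ω) := {p | u < X p.1 p.2} with hsdef
  have hs : MeasurableSet s := measurableSet_lt measurable_const hmeas
  set μ : Measure ℝ := volume.restrict (Ioc (0:ℝ) 1) with hμ
  have hsec : ∀ ω, MeasurableSet {t : ℝ | u < X t ω} := by
    intro ω
    have : Measurable fun t => X t ω :=
      hmeas.comp (measurable_id.prodMk measurable_const)
    exact measurableSet_lt measurable_const this
  -- inner integral
  have hinner : ∀ ω, (∫ t in (0:ℝ)..1, Set.indicator {t | u < X t ω} (fun _ => (1:ℝ)) t)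
      = (μ ((fun t => (t, ω)) ⁻¹' s)).toReal := by
    intro ω
    rw [intervalIntegral.integral_of_le zero_le_one]
    have h1 := integral_indicator_const (1:ℝ) (hsec ω) (μ := μ)
    have h2 : ((fun t => (t, ω)) ⁻¹' s) = {t : ℝ | u < X t ω} := rfl
    rw [h2, h1, smul_eq_mul, mul_one]
    rfl
  simp_rw [hinner]
  -- swap via product measure
  have hμfin : ∀ ω, μ ((fun t => (t, ω)) ⁻¹' s) < ⊤ := by
    intro ω
    apply lt_of_le_of_lt (measure_mono (subset_univ _))
    rw [hμ, Measure.restrict_apply_univ]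
    exact lt_of_le_of_lt (le_of_eq (Real.volume_Ioc)) (by norm_num)
  rw [integral_toReal ((measurable_measure_prodMk_right hs).aemeasurable)
    (Eventually.of_forall hμfin)]
  have hswap : (∫⁻ ω, μ ((fun t => (t, ω)) ⁻¹' s) ∂P) = (μ.prod P) s :=
    (Measure.prod_apply_symm hs).symm
  rw [hswap, Measure.prod_apply hs]
  -- pointwise evaluation of the section measure
  have hpt : ∀ t ∈ Ioc (0:ℝ) 1,
      P (Prod.mk t ⁻¹' s) = ENNReal.ofReal (1 - G (u * t ^ (-κ))) := by
    intro t ht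
    have ht0 : 0 < t := ht.1
    have hXt : Measurable (X t) :=
      hmeas.comp (measurable_const.prodMk measurable_id)
    have h3 : Prod.mk t ⁻¹' s = X t ⁻¹' (Ioi u) := rfl
    rw [h3, ← Measure.map_apply hXt measurableSet_Ioi, hss t ht0,
      Measure.map_apply (hX1.const_mul _) measurableSet_Ioi]
    have htκ : 0 < t ^ κ := Real.rpow_pos_of_pos ht0 κ
    have h4 : (fun ω => t ^ κ * X 1 ω) ⁻¹' (Ioi u) = {ω | u * t ^ (-κ) < X 1 ω} := by
      ext ω
      simp only [mem_preimage, mem_Ioi, mem_setOf_eq]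
      rw [Real.rpow_neg ht0.le, ← div_eq_mul_inv, div_lt_iff₀ htκ, mul_comm]
    rw [h4]
    -- tail probability
    set v := u * t ^ (-κ)
    have h5 : {ω | v < X 1 ω} = {ω | X 1 ω ≤ v}ᶜ := by
      ext ω; simp [not_le]
    have h6 : P {ω | X 1 ω ≤ v} = ENNReal.ofReal (G v) := by
      rw [← hdf v, ENNReal.ofReal_toReal (measure_ne_top P _)]
    rw [h5, measure_compl (show MeasurableSet {ω | X 1 ω ≤ v} from hX1 measurableSet_Iic) (measure_ne_top P _), h6]
    rw [measure_univ]
    rw [ENNReal.ofReal_sub _ (hG0 v), ENNReal.ofReal_one]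
  rw [setLIntegral_congr_fun measurableSet_Ioc hpt]
  -- back to a Bochner integral
  have hcont : ContinuousOn (fun t : ℝ => 1 - G (u * t ^ (-κ))) (Ioc (0:ℝ) 1) := by
    apply (continuous_const.sub hGcont).comp_continuousOn
    apply ContinuousOn.mul continuousOn_const
    intro t ht
    exact (Real.continuousAt_rpow_const t (-κ) (Or.inl (ne_of_gt ht.1))).continuousWithinAt
  have hnn : 0 ≤ᵐ[μ] fun t : ℝ => 1 - G (u * t ^ (-κ)) :=
    Eventually.of_forall fun t => by
      simp only [Pi.zero_apply]
      linarith [hGlt (u * t ^ (-κ))]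
  rw [← integral_eq_lintegral_of_nonneg_ae hnn
    (hcont.aestronglyMeasurable measurableSet_Ioc)]
  rw [hμ]
  exact integral_Ioc_eq_integral_Ioo
/-- For a self-similar process `X` with index `κ > 0` whose marginal `X(1)` has df `G`
in the Gumbel MDA with auxiliary function `w`, the mean sojourn time
`L(u) = ∫_0^1 1{X(t) > u} dt` satisfies
`E[L(u)] = (1-G(u))/(κ u w(u)) · (1+o(1))` as `u → ∞`. -/
theorem mean_sojourn_asymptotics {Ω : Type*} [MeasurableSpace Ω] (P : Measure Ω)
    [IsProbabilityMeasure P] (κ : ℝ) (hκ : 0 < κ)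
    (X : ℝ → Ω → ℝ) (hmeas : Measurable fun p : ℝ × Ω => X p.1 p.2)
    (hss : ∀ t : ℝ, 0 < t →
        Measure.map (X t) P = Measure.map (fun ω => t ^ κ * X 1 ω) P)
    (G w : ℝ → ℝ) (hw : ∀ u, 0 < w u)
    (hdf : ∀ u, (P {ω | X 1 ω ≤ u}).toReal = G u)
    (hGcont : Continuous G) (hGlt : ∀ u, G u < 1)
    (hGum : ∀ x : ℝ, Tendsto (fun u => (1 - G (u + x / w u)) / (1 - G u))
        atTop (nhds (Real.exp (-x)))) :
    Tendsto (fun u : ℝ =>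
        (∫ ω, (∫ t in (0:ℝ)..1, Set.indicator {t | u < X t ω} (fun _ => (1:ℝ)) t) ∂P) *
          (κ * u * w u) / (1 - G u))
      atTop (nhds 1) := by
  have hX1 : Measurable (X 1) :=
    hmeas.comp (measurable_const.prodMk measurable_id)
  set f : ℝ → ℝ := fun v => 1 - G v with hfdef
  have hf_cont : Continuous f := continuous_const.sub hGcont
  have hf_pos : ∀ v, 0 < f v := fun v => sub_pos.mpr (hGlt v)
  have hGmono : Monotone G := by
    intro a b hab
    rw [← hdf a, ← hdf b]
    apply ENNReal.toReal_mono (measure_ne_top P _)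
    apply measure_mono
    intro ω hω
    exact le_trans hω hab
  have hf_anti : Antitone f := fun a b hab => sub_le_sub_left (hGmono hab) 1
  have hf0 : Tendsto f atTop (nhds 0) := by
    have h1 : Tendsto (fun v => (P.map (X 1)) (Iic v)) atTop
        (nhds ((P.map (X 1)) univ)) := tendsto_measure_Iic_atTop _
    have h2 : (P.map (X 1)) univ = 1 := by
      rw [Measure.map_apply hX1 MeasurableSet.univ]
      simp
    rw [h2] at h1
    have h3 : Tendsto (fun v => ((P.map (X 1)) (Iic v)).toReal) atTop (nhds 1) := by
      have := (ENNReal.tendsto_toReal (by norm_num : (1:ENNReal) ≠ ⊤)).comp h1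
      simpa [Function.comp_def] using this
    have h4 : ∀ v, ((P.map (X 1)) (Iic v)).toReal = G v := by
      intro v
      rw [Measure.map_apply hX1 measurableSet_Iic, ← hdf v]
      rfl
    simp_rw [h4] at h3
    have h5 : Tendsto (fun v : ℝ => 1 - G v) atTop (nhds (1 - 1)) :=
      tendsto_const_nhds.sub h3
    simpa using h5
  have hGum' : ∀ x : ℝ, Tendsto (fun u => f (u + x / w u) / f u) atTop
      (nhds (Real.exp (-x))) := hGum
  have hmain := analysis_main f w κ hκ hf_cont hf_anti hf_pos hf0 hw hGum'
  apply hmain.congr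
  intro u
  rw [prob_step P κ X hmeas hss G hdf hGcont hGlt u]
end

section
/- Let K(s,t) = (1/2^k)((s^{2h}+t^{2h})^k − |s−t|^{2hk}) be the covariance of bi-fractional Brownian motion with h ∈ (0,1), k ∈ (0,1], κ = hk. Then the Lamperti transform covariance r(t) = e^{−κt} K(1, e^t) satisfies r(t) = 1 − 2^{−k} t^{2hk} + o(|t| + |t|^{2hk}) as t → 0. -/
open Asymptotics Filter

lemma bifBm_aux1 (h k : ℝ) (hh0 : 0 < h) (hk0 : 0 < k) :
    (fun t : ℝ => Real.exp (-(h * k) * t) *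
        ((1 / 2 ^ k) * (1 + Real.exp t ^ (2 * h)) ^ k) - 1)
      =o[nhds (0:ℝ)] fun t : ℝ => t := by
  have hu : HasDerivAt (fun t : ℝ => Real.exp (-(h * k) * t)) (-(h * k)) 0 := by
    simpa using ((hasDerivAt_id (0:ℝ)).const_mul (-(h*k))).exp
  have hv1 : HasDerivAt (fun t : ℝ => Real.exp t ^ (2*h)) (2*h) 0 := by
    simpa using (Real.hasDerivAt_exp 0).rpow_const (Or.inl (Real.exp_ne_zero 0))
  have hv2 : HasDerivAt (fun t : ℝ => 1 + Real.exp t ^ (2*h)) (2*h) 0 := hv1.const_add 1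
  have hv3 : HasDerivAt (fun t : ℝ => (1 + Real.exp t ^ (2*h)) ^ k)
      (2*h * k * 2 ^ (k-1)) 0 := by
    have := hv2.rpow_const (p := k) (Or.inl (by norm_num : (1:ℝ) + Real.exp 0 ^ (2*h) ≠ 0))
    have e2 : (1:ℝ) + Real.exp 0 ^ (2*h) = 2 := by norm_num [Real.one_rpow]
    rw [e2] at this
    simpa using this
  have hv4 : HasDerivAt (fun t : ℝ => (1 / 2 ^ k) * (1 + Real.exp t ^ (2*h)) ^ k)
      ((1 / 2 ^ k) * (2*h * k * 2 ^ (k-1))) 0 := hv3.const_mul _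
  have hmul := hu.mul hv4
  have h2k : (2:ℝ) ^ k ≠ 0 := ne_of_gt (Real.rpow_pos_of_pos two_pos k)
  have hval : -(h * k) * ((1 / 2 ^ k) * (1 + Real.exp 0 ^ (2*h)) ^ k) +
      Real.exp (-(h * k) * 0) * ((1 / 2 ^ k) * (2*h * k * 2 ^ (k-1))) = 0 := by
    have h1 : ((1:ℝ) + Real.exp 0 ^ (2*h)) ^ k = 2 ^ k := by
      norm_num [Real.one_rpow]
    have h2 : (2:ℝ) ^ (k - 1) = 2 ^ k / 2 := by
      rw [Real.rpow_sub two_pos, Real.rpow_one]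
    rw [h1, h2]
    simp only [mul_zero, Real.exp_zero]
    field_simp
    ring
  rw [hval] at hmul
  have := hasDerivAt_iff_isLittleO.mp hmul
  simp only [sub_zero, smul_zero, sub_zero, Pi.mul_apply] at this
  have hf0 : Real.exp (-(h * k) * 0) * ((1 / 2 ^ k) * (1 + Real.exp 0 ^ (2*h)) ^ k) = 1 := by
    norm_num [Real.one_rpow]
    field_simp
  rw [hf0] at this
  exact this

lemma bifBm_aux2 (h k : ℝ) (hh0 : 0 < h) (hk0 : 0 < k) :
    (fun t : ℝ => Real.exp (-(h * k) * t) *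
        ((1 / 2 ^ k) * |1 - Real.exp t| ^ (2 * h * k)) - 2 ^ (-k) * |t| ^ (2 * h * k))
      =o[nhds (0:ℝ)] fun t : ℝ => |t| ^ (2 * h * k) := by
  have hκ : 0 < 2 * h * k := by positivity
  have hκ' : (2 * h * k) ≠ 0 := ne_of_gt hκ
  have hzero : ∀ᶠ t in nhds (0:ℝ), |t| ^ (2*h*k) = 0 →
      Real.exp (-(h * k) * t) * ((1 / 2 ^ k) * |1 - Real.exp t| ^ (2 * h * k)) -
        2 ^ (-k) * |t| ^ (2 * h * k) = 0 := by
    filter_upwards with t ht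
    have : |t| = 0 := by
      rwa [Real.rpow_eq_zero (abs_nonneg t) hκ'] at ht
    have ht0 : t = 0 := abs_eq_zero.mp this
    subst ht0
    simp [Real.zero_rpow hκ', Real.exp_zero]
  rw [Asymptotics.isLittleO_iff_tendsto' hzero]
  nth_rewrite 1 [← nhdsNE_sup_pure (0:ℝ)]
  rw [tendsto_sup]
  constructor
  · -- punctured part
    have hslope : Tendsto (fun t : ℝ => (Real.exp t - 1) / t) (nhdsWithin 0 {(0:ℝ)}ᶜ)
        (nhds 1) := by
      have h' := hasDerivAt_iff_tendsto_slope.mp (Real.hasDerivAt_exp 0)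
      rw [Real.exp_zero] at h'
      exact h'.congr fun t => by simp [slope_def_field, Real.exp_zero]
    have hneg : Tendsto (fun t : ℝ => (1 - Real.exp t) / t) (nhdsWithin 0 {(0:ℝ)}ᶜ)
        (nhds (-1)) := by
      simpa using hslope.neg.congr fun t => by ring
    have habs : Tendsto (fun t : ℝ => |(1 - Real.exp t) / t|) (nhdsWithin 0 {(0:ℝ)}ᶜ)
        (nhds 1) := by
      simpa using hneg.abs
    have hrpow : Tendsto (fun t : ℝ => |(1 - Real.exp t) / t| ^ (2*h*k))
        (nhdsWithin 0 {(0:ℝ)}ᶜ) (nhds 1) := by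
      have hc : ContinuousAt (fun x : ℝ => x ^ (2*h*k)) 1 :=
        Real.continuousAt_rpow_const 1 (2*h*k) (Or.inl one_ne_zero)
      have := hc.tendsto.comp habs
      simpa [Real.one_rpow, Function.comp_def] using this
    have hexp : Tendsto (fun t : ℝ => Real.exp (-(h*k) * t)) (nhdsWithin 0 {(0:ℝ)}ᶜ)
        (nhds 1) := by
      have hc : ContinuousAt (fun t : ℝ => Real.exp (-(h*k) * t)) 0 := by fun_prop
      have := hc.tendsto.mono_left (nhdsWithin_le_nhds (s := {(0:ℝ)}ᶜ))
      simpa using this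
    have hψ : Tendsto (fun t : ℝ => (2:ℝ) ^ (-k) *
        (Real.exp (-(h*k) * t) * |(1 - Real.exp t) / t| ^ (2*h*k) - 1))
        (nhdsWithin 0 {(0:ℝ)}ᶜ) (nhds 0) := by
      have := ((hexp.mul hrpow).sub_const 1).const_mul ((2:ℝ) ^ (-k))
      simpa using this
    refine hψ.congr' ?_
    filter_upwards [self_mem_nhdsWithin] with t ht
    have ht0 : t ≠ 0 := ht
    have habs0 : (0:ℝ) < |t| := abs_pos.mpr ht0
    have hY : (0:ℝ) < |t| ^ (2*h*k) := Real.rpow_pos_of_pos habs0 _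
    have hdiv : |(1 - Real.exp t) / t| ^ (2*h*k) =
        |1 - Real.exp t| ^ (2*h*k) / |t| ^ (2*h*k) := by
      rw [abs_div, Real.div_rpow (abs_nonneg _) (abs_nonneg _)]
    have h2k : (2:ℝ) ^ (-k) = 1 / 2 ^ k := by
      rw [Real.rpow_neg (by norm_num : (0:ℝ) ≤ 2), one_div]
    rw [hdiv, h2k]
    field_simp
  · -- pure part
    have h0 : (Real.exp (-(h * k) * 0) * ((1 / 2 ^ k) * |1 - Real.exp 0| ^ (2 * h * k)) -
        2 ^ (-k) * |(0:ℝ)| ^ (2 * h * k)) / |(0:ℝ)| ^ (2 * h * k) = 0 := by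
      simp [Real.zero_rpow hκ', Real.exp_zero]
    have := (tendsto_pure_pure (fun t : ℝ =>
        (Real.exp (-(h * k) * t) * ((1 / 2 ^ k) * |1 - Real.exp t| ^ (2 * h * k)) -
          2 ^ (-k) * |t| ^ (2 * h * k)) / |t| ^ (2 * h * k)) 0).mono_right (pure_le_nhds _)
    rwa [h0] at this

/-- For the bi-fractional Brownian motion covariance
`K(s,t) = 2^{-k}((s^{2h}+t^{2h})^k - |s-t|^{2hk})` with `κ = hk`, the Lamperti
transform covariance `r(t) = e^{-κt} K(1, e^t)` satisfies
`r(t) = 1 - 2^{-k} |t|^{2hk} + o(|t| + |t|^{2hk})` as `t → 0`. -/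
theorem bifBm_lamperti_cov_expansion (h k : ℝ) (hh0 : 0 < h) (hh1 : h < 1)
    (hk0 : 0 < k) (hk1 : k ≤ 1) :
    (fun t : ℝ =>
        Real.exp (-(h * k) * t) *
            ((1 / 2 ^ k) * ((1 + Real.exp t ^ (2 * h)) ^ k -
              |1 - Real.exp t| ^ (2 * h * k))) -
          (1 - 2 ^ (-k) * |t| ^ (2 * h * k)))
      =o[nhds (0:ℝ)] fun t : ℝ => |t| + |t| ^ (2 * h * k) := by
  have hO1 : (fun t : ℝ => t) =O[nhds (0:ℝ)] fun t : ℝ => |t| + |t| ^ (2*h*k) := by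
    refine Asymptotics.isBigO_of_le _ fun t => ?_
    have h1 : (0:ℝ) ≤ |t| ^ (2*h*k) := Real.rpow_nonneg (abs_nonneg t) _
    rw [Real.norm_eq_abs, Real.norm_eq_abs,
      abs_of_nonneg (add_nonneg (abs_nonneg t) h1)]
    linarith
  have hO2 : (fun t : ℝ => |t| ^ (2*h*k)) =O[nhds (0:ℝ)]
      fun t : ℝ => |t| + |t| ^ (2*h*k) := by
    refine Asymptotics.isBigO_of_le _ fun t => ?_
    have h1 : (0:ℝ) ≤ |t| ^ (2*h*k) := Real.rpow_nonneg (abs_nonneg t) _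
    rw [Real.norm_eq_abs, Real.norm_eq_abs, abs_of_nonneg h1,
      abs_of_nonneg (add_nonneg (abs_nonneg t) h1)]
    linarith [abs_nonneg t]
  have h1 := (bifBm_aux1 h k hh0 hk0).trans_isBigO hO1
  have h2 := (bifBm_aux2 h k hh0 hk0).trans_isBigO hO2
  have := h1.sub h2
  refine this.congr_left fun t => ?_
  ring
end

section
/- Let K(s,t) = s^{2h} + t^{2h} − ((s+t)^{2h} + |s−t|^{2h})/2, h ∈ (0,1), be the covariance of sub-fractional Brownian motion. Then the Lamperti transform covariance r(t) = e^{−ht} K(1, e^t) satisfies r(t) = (2 − 2^{2h−1})·(1 − t^{2h}/(2(2−2^{2h−1})) + o(|t| + |t|^{2h})) as t → 0. -/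
open Asymptotics Filter

noncomputable def subfBmPsi (t : ℝ) : ℝ := if t = 0 then 1 else 2 * Real.sinh (t / 2) / t

lemma subfBmPsi_tendsto : Tendsto subfBmPsi (nhds 0) (nhds 1) := by
  have hF : HasDerivAt (fun t : ℝ => 2 * Real.sinh (t / 2)) 1 0 := by
    have h1 : HasDerivAt (fun t : ℝ => t / 2) (1 / 2) 0 := by
      simpa using (hasDerivAt_id (0:ℝ)).div_const 2
    have h2 := (Real.hasDerivAt_sinh ((0:ℝ)/2)).comp 0 h1
    have := h2.const_mul 2
    simpa [Real.cosh_zero] using this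
  have hslope := hasDerivAt_iff_tendsto_slope.mp hF
  have h1 : Tendsto subfBmPsi (nhdsWithin 0 {(0:ℝ)}ᶜ) (nhds 1) := by
    refine hslope.congr' ?_
    filter_upwards [self_mem_nhdsWithin] with t ht
    simp only [Set.mem_compl_iff, Set.mem_singleton_iff] at ht
    simp [slope, subfBmPsi, ht, Real.sinh_zero, div_eq_inv_mul, mul_comm]
  have h2 : Tendsto subfBmPsi (pure (0:ℝ)) (nhds 1) := by
    have : subfBmPsi 0 = 1 := by simp [subfBmPsi]
    simpa [this] using tendsto_pure_nhds subfBmPsi (0:ℝ)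
  have := h1.sup h2
  rwa [nhdsNE_sup_pure] at this

lemma subfBm_key (h : ℝ) (hh0 : 0 < h) (t : ℝ) :
    Real.exp (-h * t) * |1 - Real.exp t| ^ (2 * h)
      = |subfBmPsi t| ^ (2 * h) * |t| ^ (2 * h) := by
  rcases eq_or_ne t 0 with rfl | ht
  · simp [Real.zero_rpow (by positivity : 2 * h ≠ 0)]
  · have habs : Real.exp (-(t/2)) * |1 - Real.exp t| = |2 * Real.sinh (t/2)| := by
      rw [← abs_of_pos (Real.exp_pos (-(t/2))), ← abs_mul]
      have e1 : Real.exp (-(t/2)) * Real.exp t = Real.exp (t/2) := by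
        rw [← Real.exp_add]; ring_nf
      have : Real.exp (-(t/2)) * (1 - Real.exp t) = -(2 * Real.sinh (t/2)) := by
        rw [Real.sinh_eq, mul_sub, mul_one, e1]; ring
      rw [this, abs_neg]
    have hL : Real.exp (-h * t) = Real.exp (-(t/2)) ^ (2 * h) := by
      rw [← Real.exp_mul]; ring_nf
    rw [hL, ← Real.mul_rpow (Real.exp_pos _).le (abs_nonneg _), habs,
        ← Real.mul_rpow (abs_nonneg _) (abs_nonneg _), ← abs_mul, subfBmPsi, if_neg ht,
        div_mul_cancel₀ _ ht]

/-- For the sub-fractional Brownian motion covariance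
`K(s,t) = s^{2h} + t^{2h} - ((s+t)^{2h} + |s-t|^{2h})/2`, the Lamperti transform
covariance `r(t) = e^{-ht} K(1, e^t)` satisfies
`r(t) = (2 - 2^{2h-1})(1 - |t|^{2h}/(2(2-2^{2h-1})) + o(|t| + |t|^{2h}))` as `t → 0`. -/
theorem subfBm_lamperti_cov_expansion (h : ℝ) (hh0 : 0 < h) (hh1 : h < 1) :
    (fun t : ℝ =>
        Real.exp (-h * t) *
            (1 + Real.exp t ^ (2 * h) -
              ((1 + Real.exp t) ^ (2 * h) + |1 - Real.exp t| ^ (2 * h)) / 2) -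
          (2 - 2 ^ (2 * h - 1)) *
            (1 - |t| ^ (2 * h) / (2 * (2 - 2 ^ (2 * h - 1)))))
      =o[nhds (0:ℝ)] fun t : ℝ => |t| + |t| ^ (2 * h) := by
  have hc : (2:ℝ) ^ (2 * h - 1) < 2 := by
    have := (Real.rpow_lt_rpow_left_iff (by norm_num : (1:ℝ) < 2)).mpr
      (show 2 * h - 1 < 1 by linarith)
    simpa using this
  set c : ℝ := 2 - 2 ^ (2 * h - 1) with hcdef
  have hcpos : 0 < c := by simp only [hcdef]; linarith
  -- smooth part
  set F : ℝ → ℝ := fun t =>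
    Real.exp (-h * t) + Real.exp (h * t) - Real.exp (-h * t) * (1 + Real.exp t) ^ (2 * h) / 2
    with hFdef
  have hF0 : F 0 = c := by
    have h22 : (2:ℝ) ^ (2 * h) / 2 = 2 ^ (2 * h - 1) := by
      rw [Real.rpow_sub (by norm_num : (0:ℝ) < 2), Real.rpow_one]
    simp only [hFdef, hcdef]
    norm_num [h22]
  have hFderiv : HasDerivAt F 0 0 := by
    have h1 : HasDerivAt (fun t : ℝ => Real.exp (-h * t)) (-h) 0 := by
      have := ((hasDerivAt_id (0:ℝ)).const_mul (-h)).exp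
      simpa using this
    have h2 : HasDerivAt (fun t : ℝ => Real.exp (h * t)) h 0 := by
      have := ((hasDerivAt_id (0:ℝ)).const_mul h).exp
      simpa using this
    have h3 : HasDerivAt (fun t : ℝ => (1 + Real.exp t) ^ (2 * h))
        (Real.exp 0 * (2 * h) * (1 + Real.exp 0) ^ (2 * h - 1)) 0 := by
      have hb : HasDerivAt (fun t : ℝ => 1 + Real.exp t) (Real.exp 0) 0 :=
        (Real.hasDerivAt_exp 0).const_add 1
      exact hb.rpow_const (Or.inl (by norm_num [Real.exp_zero]))
    have h4 := (h1.mul h3).div_const 2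
    have hval : -h + h - (-h * (1 + Real.exp 0) ^ (2 * h)
        + Real.exp (-h * 0) * (Real.exp 0 * (2 * h) * (1 + Real.exp 0) ^ (2 * h - 1))) / 2
        = 0 := by
      have e1 : ((1:ℝ) + Real.exp 0) ^ (2 * h) = 2 * (1 + Real.exp 0) ^ (2 * h - 1) := by
        rw [Real.exp_zero]
        rw [show (1:ℝ) + 1 = 2 by norm_num, Real.rpow_sub (by norm_num : (0:ℝ) < 2),
          Real.rpow_one]
        ring
      simp only [Real.exp_zero, mul_zero, neg_zero] at e1 ⊢
      rw [e1]; ring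
    have := (h1.add h2).sub h4
    rw [hval] at this
    exact this
  have hA : (fun t : ℝ => F t - c) =o[nhds (0:ℝ)] fun t : ℝ => |t| + |t| ^ (2 * h) := by
    have := hasDerivAt_iff_isLittleO.mp hFderiv
    simp only [sub_zero, smul_zero, hF0] at this
    refine this.trans_isBigO (isBigO_of_le _ fun t => ?_)
    have h1 : (0:ℝ) ≤ |t| ^ (2 * h) := Real.rpow_nonneg (abs_nonneg t) _
    rw [Real.norm_eq_abs, Real.norm_eq_abs, abs_of_nonneg (by positivity : (0:ℝ) ≤ |t| + |t| ^ (2*h))]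
    linarith
  have hB : (fun t : ℝ => (|subfBmPsi t| ^ (2 * h) - 1) * |t| ^ (2 * h))
      =o[nhds (0:ℝ)] fun t : ℝ => |t| + |t| ^ (2 * h) := by
    have htend : Tendsto (fun t : ℝ => |subfBmPsi t| ^ (2 * h) - 1) (nhds 0) (nhds 0) := by
      have hcont : ContinuousAt (fun x : ℝ => |x| ^ (2 * h)) 1 := by
        exact (Real.continuousAt_rpow_const _ _ (Or.inl (by norm_num))).comp
          continuous_abs.continuousAt
      have := (hcont.tendsto.comp subfBmPsi_tendsto).sub (tendsto_const_nhds (x := (1:ℝ)))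
      simp only [Function.comp_def] at this
      simpa using this
    have h1 : (fun t : ℝ => |subfBmPsi t| ^ (2 * h) - 1) =o[nhds (0:ℝ)] (fun _ => (1:ℝ)) :=
      (isLittleO_one_iff ℝ).mpr htend
    have h2 := h1.mul_isBigO (isBigO_refl (fun t : ℝ => |t| ^ (2 * h)) (nhds 0))
    simp only [one_mul] at h2
    refine h2.trans_isBigO (isBigO_of_le _ fun t => ?_)
    have h3 : (0:ℝ) ≤ |t| ^ (2 * h) := Real.rpow_nonneg (abs_nonneg t) _
    rw [Real.norm_eq_abs, Real.norm_eq_abs, abs_of_nonneg h3,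
      abs_of_nonneg (by positivity : (0:ℝ) ≤ |t| + |t| ^ (2*h))]
    linarith [abs_nonneg t]
  have heq : (fun t : ℝ =>
        Real.exp (-h * t) *
            (1 + Real.exp t ^ (2 * h) -
              ((1 + Real.exp t) ^ (2 * h) + |1 - Real.exp t| ^ (2 * h)) / 2) -
          c * (1 - |t| ^ (2 * h) / (2 * c)))
      = fun t : ℝ => (F t - c) + (-(1/2)) * ((|subfBmPsi t| ^ (2 * h) - 1) * |t| ^ (2 * h)) := by
    funext t
    have e1 : Real.exp (-h * t) * Real.exp t ^ (2 * h) = Real.exp (h * t) := by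
      rw [← Real.exp_mul, ← Real.exp_add]; ring_nf
    have e2 := subfBm_key h hh0 t
    have e3 : c * (|t| ^ (2 * h) / (2 * c)) = |t| ^ (2 * h) / 2 := by
      field_simp
    have expand : Real.exp (-h * t) * (((1 + Real.exp t) ^ (2 * h) + |1 - Real.exp t| ^ (2 * h)) / 2)
        = Real.exp (-h * t) * (1 + Real.exp t) ^ (2 * h) / 2
          + |subfBmPsi t| ^ (2 * h) * |t| ^ (2 * h) / 2 := by
      rw [← mul_div_assoc, mul_add, e2]; ring
    simp only [hFdef]
    rw [mul_sub, mul_add, mul_one, expand, e1, mul_sub c 1, mul_one, e3]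
    ring
  rw [show (fun t : ℝ =>
        Real.exp (-h * t) *
            (1 + Real.exp t ^ (2 * h) -
              ((1 + Real.exp t) ^ (2 * h) + |1 - Real.exp t| ^ (2 * h)) / 2) -
          (2 - 2 ^ (2 * h - 1)) *
            (1 - |t| ^ (2 * h) / (2 * (2 - 2 ^ (2 * h - 1))))) = fun t : ℝ =>
        Real.exp (-h * t) *
            (1 + Real.exp t ^ (2 * h) -
              ((1 + Real.exp t) ^ (2 * h) + |1 - Real.exp t| ^ (2 * h)) / 2) -
          c * (1 - |t| ^ (2 * h) / (2 * c)) from rfl, heq]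
  exact hA.add ((hB.const_mul_left (-(1/2))))
end
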